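/- In the girth-4 setting, assume additionally that T₂ ≠ ∅. If for some i ∈ {1,2,3,4} there exist adjacent vertices u ∈ T_{x_i} and v ∈ T_{x_{i+1}} (indices modulo 4), then |T₂| = 1. -/

import Mathlib

/-- The adjacency matrix of a simple graph over `ℝ` is Hermitian. -/
lemma adjMatrix_isHermitian {V : Type*} [Fintype V] (G : SimpleGraph V)
    [DecidableRel G.Adj] : ((G.adjMatrix ℝ)).IsHermitian := by
  rw [Matrix.IsHermitian, Matrix.conjTranspose_eq_transpose_of_trivial]
  exact G.isSymm_adjMatrix

/-- The number of eigenvalues (counted with multiplicity) of the real adjacency matrix of `G`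
satisfying the predicate `p`. -/
noncomputable def eigCount {V : Type*} [Fintype V] [DecidableEq V]
    (G : SimpleGraph V) (p : ℝ → Prop) : ℕ := by
  classical
  exact (Finset.univ.filter fun i =>
    p ((adjMatrix_isHermitian G).eigenvalues i)).card
/-- `HasMinor G H` : `H` is a minor of `G`, witnessed by a family of pairwise disjoint
nonempty branch sets, each inducing a connected subgraph of `G`, such that every edge of `H`
is realized by an edge of `G` between the corresponding branch sets. -/
def HasMinor {V : Type*} {W : Type*} (G : SimpleGraph V) (H : SimpleGraph W) : Prop :=
  ∃ B : W → Set V,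
    (∀ w, (B w).Nonempty) ∧
    (Pairwise fun w₁ w₂ => Disjoint (B w₁) (B w₂)) ∧
    (∀ w, (G.induce (B w)).Connected) ∧
    (∀ ⦃w₁ w₂⦄, H.Adj w₁ w₂ → ∃ a ∈ B w₁, ∃ b ∈ B w₂, G.Adj a b)

/-- `G` is planar in the sense of Wagner: it has neither `K₅` nor `K_{3,3}` as a minor. -/
def WagnerPlanar {V : Type*} (G : SimpleGraph V) : Prop :=
  ¬ HasMinor G (⊤ : SimpleGraph (Fin 5)) ∧
    ¬ HasMinor G (completeBipartiteGraph (Fin 3) (Fin 3))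
/-- For a 4-cycle `x₀x₁x₂x₃x₀` in `G` and `S ⊆ Fin 4`, the set
`T_S = {v ∉ {x₀,x₁,x₂,x₃} : N(v) ∩ {x₀,x₁,x₂,x₃} = {x i : i ∈ S}}`. -/
def TS {V : Type*} (G : SimpleGraph V) (x : Fin 4 → V) (S : Set (Fin 4)) : Set V :=
  {v | v ∉ Set.range x ∧ ∀ i, G.Adj v (x i) ↔ i ∈ S}

/-- The set `T_j` of vertices outside the 4-cycle having exactly `j` neighbors among
`{x₀,x₁,x₂,x₃}`. -/
def Tdeg {V : Type*} (G : SimpleGraph V) (x : Fin 4 → V) (j : ℕ) : Set V :=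
  {v | v ∉ Set.range x ∧ {i : Fin 4 | G.Adj v (x i)}.ncard = j}
section Spectral

open Matrix
open scoped Classical

variable {V : Type*} [Fintype V] [DecidableEq V]

lemma two_eig_contra (G : SimpleGraph V)
    (hl : eigCount G (fun t => 1 < t) ≤ 1) (v1 v2 : V → ℝ)
    (hq : ∀ a b : ℝ, ¬(a = 0 ∧ b = 0) →
      (a • v1 + b • v2) ⬝ᵥ (a • v1 + b • v2)
        < ((G.adjMatrix ℝ) *ᵥ (a • v1 + b • v2)) ⬝ᵥ (a • v1 + b • v2)) : False := by
  have hA : (G.adjMatrix ℝ).IsHermitian := adjMatrix_isHermitian G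
  set A := G.adjMatrix ℝ with hA_def
  set U : Matrix V V ℝ := ↑(hA.eigenvectorUnitary) with hU_def
  have hU1 : U * star U = 1 := mem_unitaryGroup_iff.mp hA.eigenvectorUnitary.2
  have hUt : (star U)ᵀ = U := by
    rw [star_eq_conjTranspose, conjTranspose_eq_transpose_of_trivial, transpose_transpose]
  have hUt2 : Uᵀ = star U := by
    rw [star_eq_conjTranspose, conjTranspose_eq_transpose_of_trivial]
  have hspec : A = U * diagonal hA.eigenvalues * star U := by
    have h := hA.spectral_theorem
    simpa using h
  have hdot : ∀ f g : V → ℝ, f ⬝ᵥ g = ∑ j, (star U *ᵥ f) j * (star U *ᵥ g) j := by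
    intro f g
    have : (star U *ᵥ f) ⬝ᵥ (star U *ᵥ g) = f ⬝ᵥ g := by
      rw [dotProduct_mulVec, ← mulVec_transpose, hUt, mulVec_mulVec, hU1, one_mulVec]
    rw [← this]
    rfl
  have hform : ∀ f g : V → ℝ,
      (A *ᵥ f) ⬝ᵥ g = ∑ j, hA.eigenvalues j * ((star U *ᵥ f) j * (star U *ᵥ g) j) := by
    intro f g
    conv_lhs => rw [hspec, ← mulVec_mulVec, ← mulVec_mulVec]
    rw [dotProduct_comm, dotProduct_mulVec, ← mulVec_transpose, hUt2, dotProduct_comm]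
    simp only [mulVec_diagonal, dotProduct, mul_assoc]
  set F := Finset.univ.filter (fun j => 1 < hA.eigenvalues j) with hF_def
  have hFcard : F.card ≤ 1 := by
    unfold eigCount at hl
    exact hl
  have key : ∀ a b : ℝ, ¬(a = 0 ∧ b = 0) →
      (∀ j ∈ F, (star U *ᵥ (a • v1 + b • v2)) j = 0) → False := by
    intro a b hab hzero
    have h1 := hq a b hab
    set w := a • v1 + b • v2 with hw_def
    have hle : (A *ᵥ w) ⬝ᵥ w ≤ w ⬝ᵥ w := by
      rw [hform w w, hdot w w]
      apply Finset.sum_le_sum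
      intro j _
      by_cases hj : j ∈ F
      · rw [hzero j hj]; simp
      · have hμ : hA.eigenvalues j ≤ 1 := by
          by_contra hgt
          exact hj (Finset.mem_filter.mpr ⟨Finset.mem_univ j, not_le.mp hgt⟩)
        have hnn : 0 ≤ (star U *ᵥ w) j * (star U *ᵥ w) j := mul_self_nonneg _
        nlinarith
    exact absurd h1 (not_lt.mpr hle)
  by_cases hall : ∀ j ∈ F, (star U *ᵥ v1) j = 0
  · refine key 1 0 (by simp) ?_
    intro j hj
    simp [mulVec_add, mulVec_smul, hall j hj]
  · push_neg at hall
    obtain ⟨j0, hj0F, hj0⟩ := hall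
    have hFeq : ∀ j ∈ F, j = j0 := fun j hj => Finset.card_le_one.mp hFcard j hj j0 hj0F
    refine key ((star U *ᵥ v2) j0) (-(star U *ᵥ v1) j0) ?_ ?_
    · intro h
      exact hj0 (neg_eq_zero.mp h.2)
    · intro j hj
      rw [hFeq j hj]
      simp [mulVec_add, mulVec_smul, mulVec_neg]
      ring



lemma cert_contra (G : SimpleGraph V) (hl : eigCount G (fun t => 1 < t) ≤ 1)
    (y0 y1 y2 y3 yu yv yw : V)
    (e01 : G.Adj y0 y1) (e1v : G.Adj y1 yv) (e23 : G.Adj y2 y3) (e2w : G.Adj y2 yw)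
    (e03 : G.Adj y0 y3) (e0u : G.Adj y0 yu) (e0w : G.Adj y0 yw) (e12 : G.Adj y1 y2)
    (euv : G.Adj yu yv)
    (n0v : ¬G.Adj y0 yv) (n2u : ¬G.Adj y2 yu) (n3u : ¬G.Adj y3 yu) (n3w : ¬G.Adj y3 yw)
    (nuw : ¬G.Adj yu yw) (n02 : ¬G.Adj y0 y2) (n13 : ¬G.Adj y1 y3) (n1u : ¬G.Adj y1 yu)
    (n1w : ¬G.Adj y1 yw) (nv2 : ¬G.Adj yv y2) (nv3 : ¬G.Adj yv y3) (nvw : ¬G.Adj yv yw)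
    (d0v : y0 ≠ yv) (d2u : y2 ≠ yu) (d3u : y3 ≠ yu) (d3w : y3 ≠ yw) (duw : yu ≠ yw)
    (d02 : y0 ≠ y2) (d13 : y1 ≠ y3) (d1u : y1 ≠ yu) (d1w : y1 ≠ yw) (dv2 : yv ≠ y2)
    (dv3 : yv ≠ y3) (dvw : yv ≠ yw) : False := by
  have hirr : ∀ z : V, ¬ G.Adj z z := fun z => G.irrefl
  have n0v' : ¬G.Adj yv y0 := fun h => n0v h.symm
  have n2u' : ¬G.Adj yu y2 := fun h => n2u h.symm
  have n3u' : ¬G.Adj yu y3 := fun h => n3u h.symm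
  have n3w' : ¬G.Adj yw y3 := fun h => n3w h.symm
  have nuw' : ¬G.Adj yw yu := fun h => nuw h.symm
  have n02' : ¬G.Adj y2 y0 := fun h => n02 h.symm
  have n13' : ¬G.Adj y3 y1 := fun h => n13 h.symm
  have n1u' : ¬G.Adj yu y1 := fun h => n1u h.symm
  have n1w' : ¬G.Adj yw y1 := fun h => n1w h.symm
  have nv2' : ¬G.Adj y2 yv := fun h => nv2 h.symm
  have nv3' : ¬G.Adj y3 yv := fun h => nv3 h.symm
  have nvw' : ¬G.Adj yw yv := fun h => nvw h.symm
  have d01 : y0 ≠ y1 := G.ne_of_adj e01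
  have d1v : y1 ≠ yv := G.ne_of_adj e1v
  have d23 : y2 ≠ y3 := G.ne_of_adj e23
  have d2w : y2 ≠ yw := G.ne_of_adj e2w
  have d03 : y0 ≠ y3 := G.ne_of_adj e03
  have d0u : y0 ≠ yu := G.ne_of_adj e0u
  have d0w : y0 ≠ yw := G.ne_of_adj e0w
  have d12 : y1 ≠ y2 := G.ne_of_adj e12
  have duv : yu ≠ yv := G.ne_of_adj euv
  apply two_eig_contra G hl
    (Pi.single y0 (1:ℝ) + Pi.single y1 2 + Pi.single yv 3)
    (Pi.single y2 (3:ℝ) + Pi.single y3 2 + Pi.single yu (-2) + Pi.single yw 2)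
  intro a b hab
  simp only [smul_add, Matrix.mulVec_add, Matrix.mulVec_smul, Matrix.mulVec_single,
    dotProduct_add, add_dotProduct, dotProduct_smul,
    smul_dotProduct, dotProduct_single, Pi.add_apply, Pi.smul_apply, op_smul_eq_mul, Matrix.col_apply,
    Pi.single_apply, SimpleGraph.adjMatrix_apply, smul_eq_mul,
    e01, e1v, e23, e2w, e03, e0u, e0w, e12, euv,
    e01.symm, e1v.symm, e23.symm, e2w.symm, e03.symm, e0u.symm, e0w.symm, e12.symm, euv.symm,
    n0v, n2u, n3u, n3w, nuw, n02, n13, n1u, n1w, nv2, nv3, nvw,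
    n0v', n2u', n3u', n3w', nuw', n02', n13', n1u', n1w', nv2', nv3', nvw',
    hirr,
    d0v, d2u, d3u, d3w, duw, d02, d13, d1u, d1w, dv2, dv3, dvw,
    d01, d1v, d23, d2w, d03, d0u, d0w, d12, duv,
    d0v.symm, d2u.symm, d3u.symm, d3w.symm, duw.symm, d02.symm, d13.symm, d1u.symm,
    d1w.symm, dv2.symm, dv3.symm, dvw.symm,
    d01.symm, d1v.symm, d23.symm, d2w.symm, d03.symm, d0u.symm, d0w.symm, d12.symm, duv.symm,
    if_true, if_false]
  by_cases hb : b = 0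
  · subst hb
    have ha : a ≠ 0 := fun h => hab ⟨h, rfl⟩
    have ha2 : 0 < a * a := mul_self_pos.mpr ha
    nlinarith
  · have hb2 : 0 < b * b := mul_self_pos.mpr hb
    nlinarith [sq_nonneg (a + b), sq_nonneg a]

lemma induce_singleton_connected (G : SimpleGraph V) (a : V) :
    (G.induce ({a} : Set V)).Connected := by
  rw [SimpleGraph.connected_iff]
  refine ⟨?_, ⟨⟨a, rfl⟩⟩⟩
  intro z w
  have : z = w := Subtype.ext (z.2.trans w.2.symm)
  exact this ▸ SimpleGraph.Reachable.refl z

lemma induce_triple_connected (G : SimpleGraph V) (a b c : V) (hab : G.Adj a b)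
    (hbc : G.Adj b c) : (G.induce ({a, b, c} : Set V)).Connected := by
  rw [SimpleGraph.connected_iff]
  have hb : b ∈ ({a, b, c} : Set V) := by simp
  refine ⟨?_, ⟨⟨a, by simp⟩⟩⟩
  have hub : ∀ (z : V) (hz : z ∈ ({a, b, c} : Set V)),
      (G.induce ({a, b, c} : Set V)).Reachable ⟨z, hz⟩ ⟨b, hb⟩ := by
    intro z hz
    simp only [Set.mem_insert_iff, Set.mem_singleton_iff] at hz
    rcases hz with rfl | rfl | rfl
    · exact SimpleGraph.Adj.reachable (by exact hab)
    · exact SimpleGraph.Reachable.refl _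
    · exact SimpleGraph.Adj.reachable (by exact hbc.symm)
  intro z w
  exact (hub z z.2).trans (hub w w.2).symm

lemma k33_minor (G : SimpleGraph V) (B1 B2 : Fin 3 → Set V)
    (hne1 : ∀ i, (B1 i).Nonempty) (hne2 : ∀ i, (B2 i).Nonempty)
    (hd1 : ∀ i j, i ≠ j → Disjoint (B1 i) (B1 j))
    (hd2 : ∀ i j, i ≠ j → Disjoint (B2 i) (B2 j))
    (hd12 : ∀ i j, Disjoint (B1 i) (B2 j))
    (hc1 : ∀ i, (G.induce (B1 i)).Connected) (hc2 : ∀ i, (G.induce (B2 i)).Connected)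
    (hadj : ∀ i j, ∃ a ∈ B1 i, ∃ b ∈ B2 j, G.Adj a b) :
    HasMinor G (completeBipartiteGraph (Fin 3) (Fin 3)) := by
  refine ⟨Sum.elim B1 B2, ?_, ?_, ?_, ?_⟩
  · rintro (i | i)
    · exact hne1 i
    · exact hne2 i
  · rintro (i | i) (j | j) hij
    · exact hd1 i j (by simpa using hij)
    · exact hd12 i j
    · exact (hd12 j i).symm
    · exact hd2 i j (by simpa using hij)
  · rintro (i | i)
    · exact hc1 i
    · exact hc2 i
  · rintro (i | i) (j | j) hadj'
    · simp [completeBipartiteGraph] at hadj'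
    · exact hadj i j
    · obtain ⟨p, hp, q, hq, h⟩ := hadj j i
      exact ⟨q, hq, p, hp, h.symm⟩
    · simp [completeBipartiteGraph] at hadj'

lemma k33_singletons (G : SimpleGraph V) (a1 a2 a3 b1 b2 b3 : V)
    (da12 : a1 ≠ a2) (da13 : a1 ≠ a3) (da23 : a2 ≠ a3)
    (db12 : b1 ≠ b2) (db13 : b1 ≠ b3) (db23 : b2 ≠ b3)
    (d11 : a1 ≠ b1) (d12 : a1 ≠ b2) (d13 : a1 ≠ b3)
    (d21 : a2 ≠ b1) (d22 : a2 ≠ b2) (d23 : a2 ≠ b3)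
    (d31 : a3 ≠ b1) (d32 : a3 ≠ b2) (d33 : a3 ≠ b3)
    (h11 : G.Adj a1 b1) (h12 : G.Adj a1 b2) (h13 : G.Adj a1 b3)
    (h21 : G.Adj a2 b1) (h22 : G.Adj a2 b2) (h23 : G.Adj a2 b3)
    (h31 : G.Adj a3 b1) (h32 : G.Adj a3 b2) (h33 : G.Adj a3 b3) :
    HasMinor G (completeBipartiteGraph (Fin 3) (Fin 3)) := by
  apply k33_minor G ![{a1}, {a2}, {a3}] ![{b1}, {b2}, {b3}]
  · intro i; fin_cases i <;> simp
  · intro i; fin_cases i <;> simp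
  · intro i j hij; fin_cases i <;> fin_cases j <;>
      simp_all [Set.disjoint_singleton, da12, da13, da23, da12.symm, da13.symm, da23.symm]
  · intro i j hij; fin_cases i <;> fin_cases j <;>
      simp_all [Set.disjoint_singleton, db12, db13, db23, db12.symm, db13.symm, db23.symm]
  · intro i j; fin_cases i <;> fin_cases j <;>
      first
        | exact Set.disjoint_singleton_left.mpr d11
        | exact Set.disjoint_singleton_left.mpr d12
        | exact Set.disjoint_singleton_left.mpr d13
        | exact Set.disjoint_singleton_left.mpr d21
        | exact Set.disjoint_singleton_left.mpr d22
        | exact Set.disjoint_singleton_left.mpr d23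
        | exact Set.disjoint_singleton_left.mpr d31
        | exact Set.disjoint_singleton_left.mpr d32
        | exact Set.disjoint_singleton_left.mpr d33
  · intro i; fin_cases i <;> exact induce_singleton_connected G _
  · intro i; fin_cases i <;> exact induce_singleton_connected G _
  · intro i j; fin_cases i <;> fin_cases j <;>
      first
        | exact ⟨_, rfl, _, rfl, h11⟩ | exact ⟨_, rfl, _, rfl, h12⟩ | exact ⟨_, rfl, _, rfl, h13⟩
        | exact ⟨_, rfl, _, rfl, h21⟩ | exact ⟨_, rfl, _, rfl, h22⟩ | exact ⟨_, rfl, _, rfl, h23⟩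
        | exact ⟨_, rfl, _, rfl, h31⟩ | exact ⟨_, rfl, _, rfl, h32⟩ | exact ⟨_, rfl, _, rfl, h33⟩
end Spectral

/-- in the girth-4 setting, if moreover `T₂ ≠ ∅` and for some `i` there are
adjacent vertices `u ∈ T_{x_i}` and `v ∈ T_{x_{i+1}}`, then `|T₂| = 1`. -/
theorem girth_four_consecutive_edge_T2_card_one {V : Type*} [Fintype V] [DecidableEq V] (G : SimpleGraph V)
    (hconn : G.Connected) (htf : G.CliqueFree 3)
    (hl : eigCount G (fun t => 1 < t) ≤ 1) (hplanar : WagnerPlanar G)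
    (hgirth : G.egirth = 4) (x : Fin 4 → V) (hinj : Function.Injective x)
    (hcyc : ∀ i, G.Adj (x i) (x (i + 1)))
    (hT2 : (Tdeg G x 2).Nonempty) :
    ∀ i : Fin 4, (∃ u ∈ TS G x {i}, ∃ v ∈ TS G x {i + 1}, G.Adj u v) →
      (Tdeg G x 2).ncard = 1 := by
  rintro i ⟨u, hu, v, hv, huv⟩
  -- arithmetic facts in `Fin 4`
  have q1 : ∀ k : Fin 4, k + 1 + 1 = k + 2 := by decide
  have q2 : ∀ k : Fin 4, k + 2 + 1 = k + 3 := by decide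
  have q3 : ∀ k : Fin 4, k + 3 + 1 = k := by decide
  have q4 : ∀ k : Fin 4, k + 1 + 2 = k + 3 := by decide
  have q5 : ∀ k : Fin 4, k + 2 + 2 = k := by decide
  have q6 : ∀ k : Fin 4, k + 3 + 2 = k + 1 := by decide
  have ne1 : ∀ k : Fin 4, k ≠ k + 1 := by decide
  have ne2 : ∀ k : Fin 4, k ≠ k + 2 := by decide
  have ne3 : ∀ k : Fin 4, k ≠ k + 3 := by decide
  have ne4 : ∀ k : Fin 4, k + 1 ≠ k + 2 := by decide
  have ne5 : ∀ k : Fin 4, k + 1 ≠ k + 3 := by decide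
  have ne6 : ∀ k : Fin 4, k + 2 ≠ k + 3 := by decide
  have f4a : ∀ a k : Fin 4, a = k ∨ a = k + 1 ∨ a = k + 2 ∨ a = k + 3 := by decide
  have f4b : ∀ a b : Fin 4, a ≠ b → b ≠ a + 1 → a ≠ b + 1 → b = a + 2 := by decide
  -- triangle-freeness
  have htri : ∀ a b c : V, G.Adj a b → G.Adj b c → G.Adj a c → False := by
    intro a b c h1 h2 h3
    exact htf {a, b, c} (SimpleGraph.is3Clique_triple_iff.mpr ⟨h1, h3, h2⟩)
  have hxopp : ∀ j : Fin 4, ¬ G.Adj (x j) (x (j + 2)) := by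
    intro j h
    exact htri (x j) (x (j + 1)) (x (j + 2)) (hcyc j) (q1 j ▸ hcyc (j + 1)) h
  -- basic facts about u and v
  have hur : u ∉ Set.range x := hu.1
  have hvr : v ∉ Set.range x := hv.1
  have hnr : ∀ z, z ∉ Set.range x → ∀ j, z ≠ x j := fun z hz j h => hz ⟨j, h.symm⟩
  have hu1 : G.Adj u (x i) := (hu.2 i).mpr rfl
  have hun : ∀ j, j ≠ i → ¬G.Adj u (x j) := fun j hj h => hj ((hu.2 j).mp h)
  have hv1 : G.Adj v (x (i + 1)) := (hv.2 (i + 1)).mpr rfl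
  have hvn : ∀ j, j ≠ i + 1 → ¬G.Adj v (x j) := fun j hj h => hj ((hv.2 j).mp h)
  -- classification of T₂ vertices
  have hclass : ∀ w, w ∈ Tdeg G x 2 →
      (∀ j, G.Adj w (x j) ↔ (j = i ∨ j = i + 2)) ∨
      (∀ j, G.Adj w (x j) ↔ (j = i + 1 ∨ j = i + 3)) := by
    intro w hw
    obtain ⟨a, b, hab, hS⟩ := Set.ncard_eq_two.mp hw.2
    have hmem : ∀ j, G.Adj w (x j) ↔ (j = a ∨ j = b) := by
      intro j
      constructor
      · intro h
        have hj : j ∈ ({a, b} : Set (Fin 4)) := by rw [← hS]; exact h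
        simpa using hj
      · intro h
        have hj : j ∈ ({a, b} : Set (Fin 4)) := by simpa using h
        rw [← hS] at hj
        exact hj
    have hcons : ∀ j : Fin 4, ¬(G.Adj w (x j) ∧ G.Adj w (x (j + 1))) := by
      rintro j ⟨h1, h2⟩
      exact htri w (x j) (x (j + 1)) h1 (hcyc j) h2
    have hba : b ≠ a + 1 := by
      rintro rfl
      exact hcons a ⟨(hmem a).mpr (Or.inl rfl), (hmem (a + 1)).mpr (Or.inr rfl)⟩
    have hab' : a ≠ b + 1 := by
      rintro rfl
      exact hcons b ⟨(hmem b).mpr (Or.inr rfl), (hmem (b + 1)).mpr (Or.inl rfl)⟩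
    have hb2 : b = a + 2 := f4b a b hab hba hab'
    subst hb2
    rcases f4a a i with rfl | rfl | rfl | rfl
    · exact Or.inl hmem
    · simp only [q4 i] at hmem
      exact Or.inr hmem
    · simp only [q5 i] at hmem
      exact Or.inl fun j => (hmem j).trans or_comm
    · simp only [q6 i] at hmem
      exact Or.inr fun j => (hmem j).trans or_comm
  -- every T₂ vertex of the first type is adjacent to v
  have hA0 : ∀ w, w ∉ Set.range x → (∀ j, G.Adj w (x j) ↔ (j = i ∨ j = i + 2)) →
      G.Adj v w := by
    intro w hwr hwadj
    by_contra hnadj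
    have wx0 : G.Adj w (x i) := (hwadj i).mpr (Or.inl rfl)
    have wx2 : G.Adj w (x (i + 2)) := (hwadj (i + 2)).mpr (Or.inr rfl)
    have wn1 : ¬G.Adj w (x (i + 1)) := by
      intro h
      rcases (hwadj (i + 1)).mp h with h' | h'
      · exact ne1 i h'.symm
      · exact ne4 i h'
    have wn3 : ¬G.Adj w (x (i + 3)) := by
      intro h
      rcases (hwadj (i + 3)).mp h with h' | h'
      · exact ne3 i h'.symm
      · exact ne6 i h'.symm
    exact cert_contra G hl (x i) (x (i + 1)) (x (i + 2)) (x (i + 3)) u v w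
      (hcyc i) hv1.symm (q2 i ▸ hcyc (i + 2)) wx2.symm ((q3 i ▸ hcyc (i + 3)).symm)
      hu1.symm wx0.symm (q1 i ▸ hcyc (i + 1)) huv
      (fun h => hvn i (ne1 i) h.symm) (fun h => hun (i + 2) (ne2 i).symm h.symm)
      (fun h => hun (i + 3) (ne3 i).symm h.symm) (fun h => wn3 h.symm)
      (fun h => htri u w (x i) h wx0 hu1) (hxopp i) (q4 i ▸ hxopp (i + 1))
      (fun h => hun (i + 1) (ne1 i).symm h.symm) (fun h => wn1 h.symm)
      (hvn (i + 2) (ne4 i).symm) (hvn (i + 3) (ne5 i).symm) hnadj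
      (hnr v hvr i).symm (hnr u hur (i + 2)).symm (hnr u hur (i + 3)).symm
      (hnr w hwr (i + 3)).symm (fun h => hun (i + 2) (ne2 i).symm (h ▸ wx2))
      (fun h => ne2 i (hinj h)) (fun h => ne5 i (hinj h))
      (hnr u hur (i + 1)).symm (hnr w hwr (i + 1)).symm
      (hnr v hvr (i + 2)) (hnr v hvr (i + 3)) (fun h => wn1 (h ▸ hv1))
  -- every T₂ vertex of the second type is adjacent to u
  have hC0 : ∀ w, w ∉ Set.range x → (∀ j, G.Adj w (x j) ↔ (j = i + 1 ∨ j = i + 3)) →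
      G.Adj u w := by
    intro w hwr hwadj
    by_contra hnadj
    have wx1 : G.Adj w (x (i + 1)) := (hwadj (i + 1)).mpr (Or.inl rfl)
    have wx3 : G.Adj w (x (i + 3)) := (hwadj (i + 3)).mpr (Or.inr rfl)
    have wn0 : ¬G.Adj w (x i) := by
      intro h
      rcases (hwadj i).mp h with h' | h'
      · exact ne1 i h'
      · exact ne3 i h'
    have wn2 : ¬G.Adj w (x (i + 2)) := by
      intro h
      rcases (hwadj (i + 2)).mp h with h' | h'
      · exact ne4 i h'.symm
      · exact ne6 i h'
    exact cert_contra G hl (x (i + 1)) (x i) (x (i + 3)) (x (i + 2)) v u w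
      (hcyc i).symm hu1.symm (q2 i ▸ hcyc (i + 2)).symm wx3.symm
      (q1 i ▸ hcyc (i + 1)) hv1.symm wx1.symm ((q3 i ▸ hcyc (i + 3)).symm) huv.symm
      (fun h => hun (i + 1) (ne1 i).symm h.symm) (fun h => hvn (i + 3) (ne5 i).symm h.symm)
      (fun h => hvn (i + 2) (ne4 i).symm h.symm) (fun h => wn2 h.symm)
      (fun h => htri v w (x (i + 1)) h wx1 hv1) (q4 i ▸ hxopp (i + 1)) (hxopp i)
      (fun h => hvn i (ne1 i) h.symm) (fun h => wn0 h.symm)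
      (hun (i + 3) (ne3 i).symm) (hun (i + 2) (ne2 i).symm) hnadj
      (hnr u hur (i + 1)).symm (hnr v hvr (i + 3)).symm (hnr v hvr (i + 2)).symm
      (hnr w hwr (i + 2)).symm (fun h => hvn (i + 3) (ne5 i).symm (h ▸ wx3))
      (fun h => ne5 i (hinj h)) (fun h => ne2 i (hinj h))
      (hnr v hvr i).symm (hnr w hwr i).symm
      (hnr u hur (i + 3)) (hnr u hur (i + 2)) (fun h => wn0 (h ▸ hu1))
  -- the mixed case yields a K₃,₃ minor
  have hmixed : ∀ wa wb, wa ∉ Set.range x → wb ∉ Set.range x → wa ≠ wb →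
      (∀ j, G.Adj wa (x j) ↔ (j = i ∨ j = i + 2)) →
      (∀ j, G.Adj wb (x j) ↔ (j = i + 1 ∨ j = i + 3)) → False := by
    intro wa wb har hbr hne ta tb
    have av : G.Adj v wa := hA0 wa har ta
    have au : G.Adj u wb := hC0 wb hbr tb
    have wax0 : G.Adj wa (x i) := (ta i).mpr (Or.inl rfl)
    have wax2 : G.Adj wa (x (i + 2)) := (ta (i + 2)).mpr (Or.inr rfl)
    have wbx1 : G.Adj wb (x (i + 1)) := (tb (i + 1)).mpr (Or.inl rfl)
    have wbx3 : G.Adj wb (x (i + 3)) := (tb (i + 3)).mpr (Or.inr rfl)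
    apply hplanar.2
    have dA01 : Disjoint ({x i} : Set V) ({x (i + 2), x (i + 3), wb} : Set V) := by
      rw [Set.disjoint_singleton_left]
      simp only [Set.mem_insert_iff, Set.mem_singleton_iff]
      push_neg
      exact ⟨fun h => ne2 i (hinj h), fun h => ne3 i (hinj h), (hnr wb hbr i).symm⟩
    have dA02 : Disjoint ({x i} : Set V) ({v} : Set V) := by
      rw [Set.disjoint_singleton_left]
      exact fun h => hnr v hvr i (Set.mem_singleton_iff.mp h).symm
    have dA12 : Disjoint ({x (i + 2), x (i + 3), wb} : Set V) ({v} : Set V) := by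
      rw [Set.disjoint_singleton_right]
      simp only [Set.mem_insert_iff, Set.mem_singleton_iff]
      push_neg
      exact ⟨hnr v hvr (i + 2), hnr v hvr (i + 3),
        fun h => hvn (i + 3) (ne5 i).symm (h ▸ wbx3)⟩
    have dB01 : Disjoint ({x (i + 1)} : Set V) ({u} : Set V) := by
      rw [Set.disjoint_singleton_left]
      exact fun h => hnr u hur (i + 1) (Set.mem_singleton_iff.mp h).symm
    have dB02 : Disjoint ({x (i + 1)} : Set V) ({wa} : Set V) := by
      rw [Set.disjoint_singleton_left]
      exact fun h => hnr wa har (i + 1) (Set.mem_singleton_iff.mp h).symm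
    have dB12 : Disjoint ({u} : Set V) ({wa} : Set V) := by
      rw [Set.disjoint_singleton_left]
      intro h
      have h' : u = wa := Set.mem_singleton_iff.mp h
      exact hun (i + 2) (ne2 i).symm (h' ▸ wax2)
    have dAB00 : Disjoint ({x i} : Set V) ({x (i + 1)} : Set V) := by
      rw [Set.disjoint_singleton_left]
      exact fun h => ne1 i (hinj (Set.mem_singleton_iff.mp h))
    have dAB01 : Disjoint ({x i} : Set V) ({u} : Set V) := by
      rw [Set.disjoint_singleton_left]
      exact fun h => hnr u hur i (Set.mem_singleton_iff.mp h).symm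
    have dAB02 : Disjoint ({x i} : Set V) ({wa} : Set V) := by
      rw [Set.disjoint_singleton_left]
      exact fun h => hnr wa har i (Set.mem_singleton_iff.mp h).symm
    have dAB10 : Disjoint ({x (i + 2), x (i + 3), wb} : Set V) ({x (i + 1)} : Set V) := by
      rw [Set.disjoint_singleton_right]
      simp only [Set.mem_insert_iff, Set.mem_singleton_iff]
      push_neg
      exact ⟨fun h => ne4 i (hinj h), fun h => ne5 i (hinj h),
        (hnr wb hbr (i + 1)).symm⟩
    have dAB11 : Disjoint ({x (i + 2), x (i + 3), wb} : Set V) ({u} : Set V) := by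
      rw [Set.disjoint_singleton_right]
      simp only [Set.mem_insert_iff, Set.mem_singleton_iff]
      push_neg
      refine ⟨hnr u hur (i + 2), hnr u hur (i + 3), ?_⟩
      intro h
      exact hun (i + 1) (ne1 i).symm (h ▸ wbx1)
    have dAB12 : Disjoint ({x (i + 2), x (i + 3), wb} : Set V) ({wa} : Set V) := by
      rw [Set.disjoint_singleton_right]
      simp only [Set.mem_insert_iff, Set.mem_singleton_iff]
      push_neg
      exact ⟨hnr wa har (i + 2), hnr wa har (i + 3), hne⟩
    have dAB20 : Disjoint ({v} : Set V) ({x (i + 1)} : Set V) := by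
      rw [Set.disjoint_singleton_left]
      exact fun h => hnr v hvr (i + 1) (Set.mem_singleton_iff.mp h)
    have dAB21 : Disjoint ({v} : Set V) ({u} : Set V) := by
      rw [Set.disjoint_singleton_left]
      exact fun h => (G.ne_of_adj huv) (Set.mem_singleton_iff.mp h).symm
    have dAB22 : Disjoint ({v} : Set V) ({wa} : Set V) := by
      rw [Set.disjoint_singleton_left]
      exact fun h => (G.ne_of_adj av) (Set.mem_singleton_iff.mp h)
    apply k33_minor G ![{x i}, {x (i + 2), x (i + 3), wb}, {v}] ![{x (i + 1)}, {u}, {wa}]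
    · intro p
      fin_cases p
      · exact ⟨x i, rfl⟩
      · exact ⟨x (i + 2), Or.inl rfl⟩
      · exact ⟨v, rfl⟩
    · intro p
      fin_cases p
      · exact ⟨x (i + 1), rfl⟩
      · exact ⟨u, rfl⟩
      · exact ⟨wa, rfl⟩
    · intro p q hpq
      fin_cases p <;> fin_cases q <;>
        first
          | exact absurd rfl hpq
          | exact dA01 | exact dA01.symm | exact dA02 | exact dA02.symm
          | exact dA12 | exact dA12.symm
    · intro p q hpq
      fin_cases p <;> fin_cases q <;>
        first
          | exact absurd rfl hpq
          | exact dB01 | exact dB01.symm | exact dB02 | exact dB02.symm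
          | exact dB12 | exact dB12.symm
    · intro p q
      fin_cases p <;> fin_cases q <;>
        first
          | exact dAB00 | exact dAB01 | exact dAB02
          | exact dAB10 | exact dAB11 | exact dAB12
          | exact dAB20 | exact dAB21 | exact dAB22
    · intro p
      fin_cases p
      · exact induce_singleton_connected G _
      · exact induce_triple_connected G (x (i + 2)) (x (i + 3)) wb
          (q2 i ▸ hcyc (i + 2)) wbx3.symm
      · exact induce_singleton_connected G _
    · intro p
      fin_cases p <;> exact induce_singleton_connected G _
    · intro p q
      fin_cases p <;> fin_cases q
      · exact ⟨x i, rfl, x (i + 1), rfl, hcyc i⟩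
      · exact ⟨x i, rfl, u, rfl, hu1.symm⟩
      · exact ⟨x i, rfl, wa, rfl, wax0.symm⟩
      · exact ⟨x (i + 2), Or.inl rfl, x (i + 1), rfl, (q1 i ▸ hcyc (i + 1)).symm⟩
      · exact ⟨wb, Or.inr (Or.inr rfl), u, rfl, au.symm⟩
      · exact ⟨x (i + 2), Or.inl rfl, wa, rfl, wax2.symm⟩
      · exact ⟨v, rfl, x (i + 1), rfl, hv1⟩
      · exact ⟨v, rfl, u, rfl, huv.symm⟩
      · exact ⟨v, rfl, wa, rfl, av⟩
  -- uniqueness of the T₂ vertex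
  have key : ∀ w1 w2, w1 ∈ Tdeg G x 2 → w2 ∈ Tdeg G x 2 → w1 = w2 := by
    intro w1 w2 h1 h2
    by_contra hne
    rcases hclass w1 h1 with t1 | t1 <;> rcases hclass w2 h2 with t2 | t2
    · -- both of the first type : K₃,₃ subgraph
      have av1 : G.Adj v w1 := hA0 w1 h1.1 t1
      have av2 : G.Adj v w2 := hA0 w2 h2.1 t2
      have w1x0 : G.Adj w1 (x i) := (t1 i).mpr (Or.inl rfl)
      have w1x2 : G.Adj w1 (x (i + 2)) := (t1 (i + 2)).mpr (Or.inr rfl)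
      have w2x0 : G.Adj w2 (x i) := (t2 i).mpr (Or.inl rfl)
      have w2x2 : G.Adj w2 (x (i + 2)) := (t2 (i + 2)).mpr (Or.inr rfl)
      apply hplanar.2
      exact k33_singletons G (x i) (x (i + 2)) v (x (i + 1)) w1 w2
        (fun h => ne2 i (hinj h)) (hnr v hvr i).symm (hnr v hvr (i + 2)).symm
        (hnr w1 h1.1 (i + 1)).symm (hnr w2 h2.1 (i + 1)).symm hne
        (fun h => ne1 i (hinj h)) (hnr w1 h1.1 i).symm (hnr w2 h2.1 i).symm
        (fun h => ne4 i (hinj h).symm) (hnr w1 h1.1 (i + 2)).symm (hnr w2 h2.1 (i + 2)).symm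
        (hnr v hvr (i + 1)) (G.ne_of_adj av1) (G.ne_of_adj av2)
        (hcyc i) w1x0.symm w2x0.symm
        (q1 i ▸ hcyc (i + 1)).symm w1x2.symm w2x2.symm
        hv1 av1 av2
    · exact hmixed w1 w2 h1.1 h2.1 hne t1 t2
    · exact hmixed w2 w1 h2.1 h1.1 (Ne.symm hne) t2 t1
    · -- both of the second type
      have au1 : G.Adj u w1 := hC0 w1 h1.1 t1
      have au2 : G.Adj u w2 := hC0 w2 h2.1 t2
      have w1x1 : G.Adj w1 (x (i + 1)) := (t1 (i + 1)).mpr (Or.inl rfl)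
      have w1x3 : G.Adj w1 (x (i + 3)) := (t1 (i + 3)).mpr (Or.inr rfl)
      have w2x1 : G.Adj w2 (x (i + 1)) := (t2 (i + 1)).mpr (Or.inl rfl)
      have w2x3 : G.Adj w2 (x (i + 3)) := (t2 (i + 3)).mpr (Or.inr rfl)
      apply hplanar.2
      exact k33_singletons G (x (i + 1)) (x (i + 3)) u (x i) w1 w2
        (fun h => ne5 i (hinj h)) (hnr u hur (i + 1)).symm (hnr u hur (i + 3)).symm
        (hnr w1 h1.1 i).symm (hnr w2 h2.1 i).symm hne
        (fun h => ne1 i (hinj h).symm) (hnr w1 h1.1 (i + 1)).symm (hnr w2 h2.1 (i + 1)).symm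
        (fun h => ne3 i (hinj h).symm) (hnr w1 h1.1 (i + 3)).symm (hnr w2 h2.1 (i + 3)).symm
        (hnr u hur i) (G.ne_of_adj au1) (G.ne_of_adj au2)
        (hcyc i).symm w1x1.symm w2x1.symm
        (show G.Adj (x (i + 3)) (x i) by have h := hcyc (i + 3); rwa [q3 i] at h)
        w1x3.symm w2x3.symm
        hu1 au1 au2
  obtain ⟨w0, hw0⟩ := hT2
  rw [Set.ncard_eq_one]
  exact ⟨w0, Set.eq_singleton_iff_unique_mem.mpr ⟨hw0, fun w hw => key w w0 hw hw0⟩⟩
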